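/- arXiv:1310.6925 — 7 statements merged into one kernel-verified Lean document; each statement's English description precedes it below -/
import Mathlib

section
/- Suppose F_i > 0 for every vertex i ∈ V. If the full vertex set V is not a feasible placement, then no feasible placement exists; that is, checking the all-ones candidate solution certifies infeasibility of EVCSPP. -/
open Finset

/-- A set `S` of candidate sites is a feasible charging-station placement:
(i) the subgraph of `G` induced by `S` is connected (hence `S` is nonempty), and
(ii) every vertex's demand `F i` is met by the total capacity of selected sites
in its one-hop neighborhood set `N i`. -/
def Feasible {V : Type*} [Fintype V] [DecidableEq V]
    (G : SimpleGraph V) (f F : V → ℝ) (N : V → Finset V) (S : Finset V) : Prop :=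
  (G.induce (S : Set V)).Connected ∧ ∀ i : V, F i ≤ ∑ j ∈ N i ∩ S, f j

/-- If all demands are positive and the full vertex set is not a feasible placement,
then no feasible placement exists. -/
theorem infeasible_of_univ_infeasible {V : Type*} [Fintype V] [DecidableEq V]
    (G : SimpleGraph V) (f F : V → ℝ) (N : V → Finset V)
    (hf : ∀ j, 0 ≤ f j)
    (hNmem : ∀ i, i ∈ N i)
    (hNadj : ∀ i, ∀ j ∈ N i, j = i ∨ G.Adj i j)
    (hF : ∀ i, 0 < F i)
    (huniv : ¬ Feasible G f F N (univ : Finset V)) :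
    ¬ ∃ S : Finset V, Feasible G f F N S := by
  rintro ⟨S, hconn, hcov⟩
  apply huniv
  -- every vertex has a selected neighbor (or itself selected)
  have hreachS : ∀ i : V, ∃ j ∈ S, G.Reachable i j := by
    intro i
    have hne : (N i ∩ S).Nonempty := by
      by_contra h
      rw [Finset.not_nonempty_iff_eq_empty] at h
      have := hcov i
      rw [h, Finset.sum_empty] at this
      exact absurd this (not_le.mpr (hF i))
    obtain ⟨j, hj⟩ := hne
    rw [Finset.mem_inter] at hj
    refine ⟨j, hj.2, ?_⟩
    rcases hNadj i j hj.1 with h | h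
    · subst h; rfl
    · exact h.reachable
  have hSreach : ∀ s ∈ S, ∀ t ∈ S, G.Reachable s t := by
    intro s hs t ht
    have := hconn.preconnected ⟨s, hs⟩ ⟨t, ht⟩
    exact this.map (SimpleGraph.Embedding.induce (S : Set V)).toHom
  have hG : G.Connected := by
    obtain ⟨⟨s, hs⟩⟩ := hconn.nonempty
    haveI : Nonempty V := ⟨s⟩
    refine ⟨fun u v => ?_⟩
    obtain ⟨a, ha, hua⟩ := hreachS u
    obtain ⟨b, hb, hvb⟩ := hreachS v
    exact hua.trans ((hSreach a ha b hb).trans hvb.symm)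
  constructor
  · rw [Finset.coe_univ]
    exact ((SimpleGraph.induceUnivIso G).connected_iff).mpr hG
  · intro i
    refine (hcov i).trans (Finset.sum_le_sum_of_subset_of_nonneg ?_ ?_)
    · exact Finset.inter_subset_inter (le_refl _) (Finset.subset_univ S)
    · intro j _ _; exact hf j
end

section
/- Suppose F_i > 0 for every vertex i ∈ V. If S is a feasible placement and j ∈ V \ S, then S ∪ {j} is also a feasible placement. (The demand constraints are preserved because capacities are nonnegative, and connectivity is preserved because the demand constraint at j forces some selected vertex k ∈ N_j ∩ S, which is a neighbor of j in Ĝ.) -/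
open Finset

/-- If all demands are positive, adding any vertex `j ∉ S` to a feasible placement `S`
yields another feasible placement. -/
theorem feasible_insert {V : Type*} [Fintype V] [DecidableEq V]
    (G : SimpleGraph V) (f F : V → ℝ) (N : V → Finset V)
    (hf : ∀ j, 0 ≤ f j)
    (hNmem : ∀ i, i ∈ N i)
    (hNadj : ∀ i, ∀ j ∈ N i, j = i ∨ G.Adj i j)
    (hF : ∀ i, 0 < F i)
    (S : Finset V) (hS : Feasible G f F N S)
    (j : V) (hj : j ∉ S) :
    Feasible G f F N (insert j S) := by
  obtain ⟨hconn, hdem⟩ := hS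
  -- find k ∈ N j ∩ S
  have hpos : 0 < ∑ x ∈ N j ∩ S, f x := lt_of_lt_of_le (hF j) (hdem j)
  have hne : (N j ∩ S).Nonempty := by
    by_contra h
    rw [Finset.not_nonempty_iff_eq_empty] at h
    simp [h] at hpos
  obtain ⟨k, hk⟩ := hne
  rw [Finset.mem_inter] at hk
  have hadj : G.Adj j k := by
    rcases hNadj j k hk.1 with h | h
    · exact absurd (h ▸ hk.2) hj
    · exact h
  constructor
  · have : ((insert j S : Finset V) : Set V) = ({j, k} : Set V) ∪ (S : Set V) := by
      ext x
      simp only [Finset.coe_insert, Set.mem_insert_iff, Set.mem_union, Finset.mem_coe]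
      constructor
      · rintro (h | h) <;> tauto
      · rintro ((h | h) | h) <;> [left; (right; exact h ▸ hk.2); right] <;> tauto
    rw [this]
    exact SimpleGraph.induce_union_connected
      (SimpleGraph.induce_pair_connected_of_adj hadj).preconnected hconn.preconnected
      ⟨k, by simp [hk.2]⟩
  · intro i
    refine le_trans (hdem i) (Finset.sum_le_sum_of_subset_of_nonneg ?_ fun x _ _ => hf x)
    exact Finset.inter_subset_inter le_rfl (Finset.subset_insert _ _)
end

section
/- Suppose F_i > 0 for every vertex i ∈ V. Then feasibility is upward closed: if S is a feasible placement and S ⊆ T ⊆ V, then T is also a feasible placement. -/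
open Finset

/-- If all demands are positive, feasibility is upward closed: any superset of a
feasible placement is feasible. -/
theorem feasible_upward_closed {V : Type*} [Fintype V] [DecidableEq V]
    (G : SimpleGraph V) (f F : V → ℝ) (N : V → Finset V)
    (hf : ∀ j, 0 ≤ f j)
    (hNmem : ∀ i, i ∈ N i)
    (hNadj : ∀ i, ∀ j ∈ N i, j = i ∨ G.Adj i j)
    (hF : ∀ i, 0 < F i)
    (S T : Finset V) (hS : Feasible G f F N S) (hST : S ⊆ T) :
    Feasible G f F N T := by
  obtain ⟨hconn, hdem⟩ := hS
  have hSsub : (S : Set V) ⊆ (T : Set V) := by exact_mod_cast hST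
  -- every vertex meets S in its neighborhood
  have hmeet : ∀ v : V, ∃ j ∈ N v ∩ S, j = v ∨ G.Adj v j := by
    intro v
    by_contra h
    push_neg at h
    have hempty : N v ∩ S = ∅ := by
      by_contra hne
      obtain ⟨j, hj⟩ := Finset.nonempty_iff_ne_empty.mpr hne
      obtain ⟨h1, h2⟩ := h j hj
      rcases hNadj v j (Finset.mem_inter.mp hj).1 with h3 | h3
      exacts [h1 h3, h2 h3]
    have := hdem v
    rw [hempty, Finset.sum_empty] at this
    exact absurd this (not_le.mpr (hF v))
  constructor
  · -- connectivity
    obtain ⟨⟨u, hu⟩⟩ := hconn.nonempty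
    apply G.induce_connected_of_patches u (hSsub hu)
    intro v hv
    obtain ⟨j, hj, hcase⟩ := hmeet v
    obtain ⟨hjN, hjS⟩ := Finset.mem_inter.mp hj
    rcases hcase with rfl | hadj
    · exact ⟨(S : Set V), hSsub, hu, hjS, hconn.preconnected _ _⟩
    · refine ⟨(S : Set V) ∪ {v}, ?_, Or.inl hu, Or.inr rfl, ?_⟩
      · exact Set.union_subset hSsub (Set.singleton_subset_iff.mpr hv)
      · have hc : (G.induce ((S : Set V) ∪ {v})).Connected :=
          G.connected_induce_union hconn.preconnected
            (by
              have : Nonempty ({v} : Set V) := ⟨⟨v, rfl⟩⟩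
              unfold SimpleGraph.Preconnected
              rintro ⟨a, ha⟩ ⟨b, hb⟩
              simp only [Set.mem_singleton_iff] at ha hb
              subst ha; subst hb
              exact SimpleGraph.Reachable.refl _)
            hjS rfl hadj.symm
        exact hc.preconnected _ _
  · intro i
    refine (hdem i).trans (Finset.sum_le_sum_of_subset_of_nonneg ?_ ?_)
    · exact Finset.inter_subset_inter le_rfl hST
    · exact fun j _ _ => hf j
end

section
/- If N' is a nonempty vertex cover of G̃, then the subgraph of Ĝ induced by the set consisting of the node-vertices corresponding to N' together with all edge-vertices is connected. (The node-vertices of N' form a clique in Ĝ, and every edge-vertex is adjacent to at least one node-vertex of N' because N' is a vertex cover.) -/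
open Finset

/-- The graph `Ĝ` of the reduction: vertices are node-vertices (`Sum.inl`) and
edge-vertices (`Sum.inr`); node-vertices form a clique, a node-vertex is adjacent to an
edge-vertex iff it is an endpoint of that edge, and edge-vertices are pairwise
nonadjacent. -/
def hatG {N : Type*} (G : SimpleGraph N) : SimpleGraph (N ⊕ G.edgeSet) where
  Adj x y :=
    match x, y with
    | Sum.inl i, Sum.inl j => i ≠ j
    | Sum.inl i, Sum.inr e => i ∈ (e : Sym2 N)
    | Sum.inr e, Sum.inl i => i ∈ (e : Sym2 N)
    | Sum.inr _, Sum.inr _ => False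
  symm := by
    constructor
    rintro (i | e) (j | e') h <;> simp_all
    exact fun h' => h h'.symm
  loopless := by constructor; rintro (i | e) h <;> simp_all

/-- A set of vertices of `Ĝ` is feasible if it induces a connected subgraph and
satisfies the demand constraint: it contains at least `|Ẽ|` edge-vertices. -/
def RFeasible {N : Type*} [Fintype N] [DecidableEq N] (G : SimpleGraph N)
    [DecidableRel G.Adj] (S : Finset (N ⊕ G.edgeSet)) : Prop :=
  ((hatG G).induce (S : Set (N ⊕ G.edgeSet))).Connected ∧
    G.edgeFinset.card ≤ (S.filter (fun x => x.isRight = true)).card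

/-- The cost of a set of vertices of `Ĝ` is its number of node-vertices. -/
def rcost {N : Type*} [Fintype N] [DecidableEq N] (G : SimpleGraph N)
    [DecidableRel G.Adj] (S : Finset (N ⊕ G.edgeSet)) : ℕ :=
  (S.filter (fun x => x.isLeft = true)).card

/-- `N'` is a vertex cover of `G`: every edge of `G` has an endpoint in `N'`. -/
def IsVertexCover {N : Type*} (G : SimpleGraph N) (N' : Finset N) : Prop :=
  ∀ e ∈ G.edgeSet, ∃ i ∈ N', i ∈ e

/-- If `N'` is a nonempty vertex cover of `G̃`, then the subgraph of `Ĝ` induced by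
the node-vertices of `N'` together with all edge-vertices is connected. -/
theorem induced_connected_of_vertexCover {N : Type*} [Fintype N] [DecidableEq N]
    (G : SimpleGraph N) [DecidableRel G.Adj]
    (hE : G.edgeFinset.Nonempty)
    (N' : Finset N) (hne : N'.Nonempty) (hvc : IsVertexCover G N') :
    ((hatG G).induce
      ((N'.image Sum.inl ∪ (univ : Finset G.edgeSet).image Sum.inr :
        Finset (N ⊕ G.edgeSet)) : Set (N ⊕ G.edgeSet))).Connected := by
  obtain ⟨i₀, hi₀⟩ := hne
  set S : Finset (N ⊕ G.edgeSet) :=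
    N'.image Sum.inl ∪ (univ : Finset G.edgeSet).image Sum.inr with hS
  have hmem : ∀ x : N ⊕ G.edgeSet, x ∈ S ↔
      (∃ i ∈ N', x = Sum.inl i) ∨ (∃ e : G.edgeSet, x = Sum.inr e) := by
    intro x
    simp [hS, eq_comm]
  have h0 : (Sum.inl i₀ : N ⊕ G.edgeSet) ∈ (S : Set (N ⊕ G.edgeSet)) := by
    exact (hmem _).2 (Or.inl ⟨i₀, hi₀, rfl⟩)
  have key : ∀ v : (S : Set (N ⊕ G.edgeSet)),
      ((hatG G).induce (S : Set (N ⊕ G.edgeSet))).Reachable ⟨Sum.inl i₀, h0⟩ v := by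
    have reachNode : ∀ (i : N) (hi : i ∈ N'),
        ((hatG G).induce (S : Set (N ⊕ G.edgeSet))).Reachable ⟨Sum.inl i₀, h0⟩
          ⟨Sum.inl i, (hmem _).2 (Or.inl ⟨i, hi, rfl⟩)⟩ := by
      intro i hi
      by_cases h : i₀ = i
      · subst h; rfl
      · exact SimpleGraph.Adj.reachable (by exact h)
    rintro ⟨(j | e), hv⟩
    · have hj : j ∈ N' := by
        rcases (hmem (Sum.inl j)).1 (by exact_mod_cast hv) with ⟨i, hi, h⟩ | ⟨e, h⟩
        · cases h; exact hi
        · cases h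
      exact reachNode j hj
    · obtain ⟨i, hi, hie⟩ := hvc e e.2
      have he : (Sum.inr e : N ⊕ G.edgeSet) ∈ (S : Set (N ⊕ G.edgeSet)) := by
        exact (hmem _).2 (Or.inr ⟨e, rfl⟩)
      have : ((hatG G).induce (S : Set (N ⊕ G.edgeSet))).Adj
          ⟨Sum.inl i, (hmem _).2 (Or.inl ⟨i, hi, rfl⟩)⟩ ⟨Sum.inr e, he⟩ := hie
      exact (reachNode i hi).trans this.reachable
  exact { preconnected := fun u v => (key u).symm.trans (key v),
          nonempty := ⟨⟨Sum.inl i₀, h0⟩⟩ }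
end

section
/- If S is a feasible set in the reduction instance and S contains at least one node-vertex, then N' = {i ∈ Ñ : the node-vertex of i lies in S} is a vertex cover of G̃, and |N'| equals the cost of S. (Since the induced subgraph on S is connected and contains every edge-vertex, each edge-vertex e ∈ S must be adjacent in Ĝ to some other vertex of S; the only possible neighbors of an edge-vertex are node-vertices of its endpoints, so every edge of G̃ has an endpoint in N'.) -/
open Finset

/-- If `S` is a feasible set of the reduction instance containing at least one
node-vertex, then the set of nodes whose node-vertices lie in `S` is a vertex cover of
`G̃` whose cardinality equals the cost of `S`. -/
theorem vertexCover_of_feasible {N : Type*} [Fintype N] [DecidableEq N]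
    (G : SimpleGraph N) [DecidableRel G.Adj]
    (hE : G.edgeFinset.Nonempty)
    (S : Finset (N ⊕ G.edgeSet)) (hS : RFeasible G S)
    (hnode : ∃ i : N, Sum.inl i ∈ S) :
    IsVertexCover G ((univ : Finset N).filter (fun i => Sum.inl i ∈ S)) ∧
      ((univ : Finset N).filter (fun i => Sum.inl i ∈ S)).card = rcost G S := by
  obtain ⟨hconn, hcard⟩ := hS
  -- every edge-vertex lies in S
  have hall : ∀ e : G.edgeSet, Sum.inr e ∈ S := by
    intro e
    have hsub : S.filter (fun x => x.isRight = true) ⊆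
        (univ : Finset G.edgeSet).map (⟨Sum.inr, Sum.inr_injective⟩ : G.edgeSet ↪ N ⊕ G.edgeSet) := by
      intro x hx
      rcases x with i | e'
      · simp at hx
      · simp
    have hle : ((univ : Finset G.edgeSet).map (⟨Sum.inr, Sum.inr_injective⟩ : G.edgeSet ↪ N ⊕ G.edgeSet)).card ≤
        (S.filter (fun x => x.isRight = true)).card := by
      rw [Finset.card_map]
      calc (univ : Finset G.edgeSet).card = Fintype.card G.edgeSet := rfl
        _ = G.edgeFinset.card := (Set.toFinset_card _).symm
        _ ≤ _ := hcard
    have heq := Finset.eq_of_subset_of_card_le hsub hle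
    have : Sum.inr e ∈ (univ : Finset G.edgeSet).map (⟨Sum.inr, Sum.inr_injective⟩ : G.edgeSet ↪ N ⊕ G.edgeSet) := by
      simp
    rw [← heq] at this
    exact (Finset.mem_filter.mp this).1
  obtain ⟨i₀, hi₀⟩ := hnode
  constructor
  · intro e he
    have hmem : Sum.inr (⟨e, he⟩ : G.edgeSet) ∈ S := hall _
    have hreach := hconn.preconnected ⟨Sum.inr ⟨e, he⟩, hmem⟩ ⟨Sum.inl i₀, hi₀⟩
    obtain ⟨w⟩ := hreach
    have hlen : 0 < w.length := by
      rcases Nat.eq_zero_or_pos w.length with h0 | h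
      · have := SimpleGraph.Walk.eq_of_length_eq_zero h0
        simp at this
      · exact h
    have hadj := w.adj_getVert_succ hlen
    rw [SimpleGraph.Walk.getVert_zero] at hadj
    have hadj' : (hatG G).Adj (Sum.inr ⟨e, he⟩) ((w.getVert (0 + 1)) : N ⊕ G.edgeSet) := hadj
    have hvS : ((w.getVert (0 + 1)) : N ⊕ G.edgeSet) ∈ S := by
      have := (w.getVert (0 + 1)).2
      simpa using this
    rcases hx : ((w.getVert (0 + 1)) : N ⊕ G.edgeSet) with j | e' <;> rw [hx] at hadj' hvS
    · refine ⟨j, ?_, hadj'⟩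
      simp only [Finset.mem_filter, Finset.mem_univ, true_and]
      exact hvS
    · exact absurd hadj' (fun h => h)
  · rw [rcost]
    apply Finset.card_bij (fun i _ => Sum.inl i)
    · intro a ha
      simp only [Finset.mem_filter, Finset.mem_univ, true_and] at ha
      simp [ha]
    · intro a ha b hb h
      exact Sum.inl_injective h
    · rintro (j | e') hb
      · refine ⟨j, ?_, rfl⟩
        simp only [Finset.mem_filter] at hb ⊢
        simp [hb.1]
      · simp at hb
end

section
/- Let C be a natural number with C ≥ 1. Then G̃ has a vertex cover of size at most C if and only if there exists a feasible set S in the reduction instance whose cost is at most C. (This is the core equivalence underlying the NP-hardness of the Electric Vehicle Charging Station Placement Problem via reduction from the vertex cover problem.) -/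
open Finset

/-- Core equivalence of the NP-hardness reduction: for `C ≥ 1`, the graph `G̃` has a
vertex cover of size at most `C` iff the reduction instance has a feasible set of cost
at most `C`. -/
theorem vertexCover_iff_feasible {N : Type*} [Fintype N] [DecidableEq N]
    (G : SimpleGraph N) [DecidableRel G.Adj]
    (hE : G.edgeFinset.Nonempty)
    (C : ℕ) (hC : 1 ≤ C) :
    (∃ N' : Finset N, IsVertexCover G N' ∧ N'.card ≤ C) ↔
      (∃ S : Finset (N ⊕ G.edgeSet), RFeasible G S ∧ rcost G S ≤ C) := by
  have hcard : G.edgeFinset.card = Fintype.card G.edgeSet := Set.toFinset_card _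
  constructor
  · rintro ⟨N', hVC, hNC⟩
    obtain ⟨e0, he0⟩ := hE
    obtain ⟨i0, hi0, hi0e⟩ := hVC e0 (SimpleGraph.mem_edgeFinset.mp he0)
    refine ⟨N'.image Sum.inl ∪ (univ : Finset G.edgeSet).image Sum.inr, ⟨?_, ?_⟩, ?_⟩
    · -- connected
      set S : Finset (N ⊕ G.edgeSet) :=
        N'.image Sum.inl ∪ (univ : Finset G.edgeSet).image Sum.inr with hS
      have hi0S : (Sum.inl i0 : N ⊕ G.edgeSet) ∈ S := by
        simp [hS, hi0]
      have key : ∀ v : (S : Set (N ⊕ G.edgeSet)),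
          ((hatG G).induce (S : Set (N ⊕ G.edgeSet))).Reachable v ⟨Sum.inl i0, hi0S⟩ := by
        rintro ⟨(j | e), hv⟩
        · rcases eq_or_ne j i0 with rfl | hne
          · exact SimpleGraph.Reachable.refl _
          · exact SimpleGraph.Adj.reachable (by exact hne)
        · obtain ⟨j, hjN, hje⟩ := hVC e.1 e.2
          have hjS : (Sum.inl j : N ⊕ G.edgeSet) ∈ S := by simp [hS, hjN]
          have h1 : ((hatG G).induce (S : Set (N ⊕ G.edgeSet))).Adj ⟨Sum.inr e, hv⟩
              ⟨Sum.inl j, hjS⟩ := by exact hje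
          refine (h1.reachable).trans ?_
          rcases eq_or_ne j i0 with rfl | hne
          · exact SimpleGraph.Reachable.refl _
          · exact SimpleGraph.Adj.reachable (by exact hne)
      haveI : Nonempty (S : Set (N ⊕ G.edgeSet)) := ⟨⟨Sum.inl i0, hi0S⟩⟩
      exact ⟨fun u v => (key u).trans (key v).symm⟩
    · -- demand
      rw [hcard]
      refine le_trans ?_ (card_le_card (filter_subset_filter _ subset_union_right))
      have : ((univ : Finset G.edgeSet).image Sum.inr).filter
          (fun x : N ⊕ G.edgeSet => x.isRight = true)
          = (univ : Finset G.edgeSet).image Sum.inr := by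
        refine filter_true_of_mem ?_
        intro x hx
        obtain ⟨e, _, rfl⟩ := mem_image.mp hx
        rfl
      rw [this, card_image_of_injective _ Sum.inr_injective, card_univ]
    · -- cost
      unfold rcost
      have hsub : ((N'.image Sum.inl ∪ (univ : Finset G.edgeSet).image Sum.inr).filter
          (fun x : N ⊕ G.edgeSet => x.isLeft = true)) ⊆ N'.image Sum.inl := ?_
      · exact le_trans (card_le_card hsub) (le_trans card_image_le hNC)
      intro x hx
      rw [mem_filter, mem_union] at hx
      rcases hx with ⟨h1 | h1, h2⟩
      · exact h1
      · obtain ⟨e, _, rfl⟩ := mem_image.mp h1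
        simp at h2
  · rintro ⟨S, ⟨hconn, hdem⟩, hcost⟩
    -- all edge-vertices are in S
    have hall : ∀ e : G.edgeSet, (Sum.inr e : N ⊕ G.edgeSet) ∈ S := by
      have hsub : S.filter (fun x => x.isRight = true) ⊆
          (univ : Finset (N ⊕ G.edgeSet)).filter (fun x => x.isRight = true) :=
        filter_subset_filter _ (subset_univ S)
      have hBcard : ((univ : Finset (N ⊕ G.edgeSet)).filter
          (fun x => x.isRight = true)).card = Fintype.card G.edgeSet := by
        have : (univ : Finset (N ⊕ G.edgeSet)).filter (fun x => x.isRight = true)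
            = (univ : Finset G.edgeSet).image Sum.inr := by
          ext x; rcases x with i | e <;> simp
        rw [this, card_image_of_injective _ Sum.inr_injective, card_univ]
      have heq := eq_of_subset_of_card_le hsub (by omega)
      intro e
      have : (Sum.inr e : N ⊕ G.edgeSet) ∈ S.filter (fun x => x.isRight = true) := by
        rw [heq]; simp
      exact (mem_filter.mp this).1
    set N' : Finset N := univ.filter (fun i => (Sum.inl i : N ⊕ G.edgeSet) ∈ S) with hN'
    have hN'card : N'.card ≤ rcost G S := by
      apply card_le_card_of_injOn (fun i => (Sum.inl i : N ⊕ G.edgeSet))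
      · intro i hi
        rw [hN', mem_coe, mem_filter] at hi
        simp [rcost, hi.2]
      · intro a _ b _ h
        exact Sum.inl_injective h
    by_cases hVC : IsVertexCover G N'
    · exact ⟨N', hVC, le_trans hN'card hcost⟩
    · -- uncovered edge case: S is a singleton edge-vertex
      rw [IsVertexCover] at hVC
      push_neg at hVC
      obtain ⟨e, he, hunc⟩ := hVC
      have hunc' : ∀ i ∈ (e : Sym2 N), (Sum.inl i : N ⊕ G.edgeSet) ∉ S := by
        intro i hie hiS
        exact hunc i (by rw [hN']; simp [hiS]) hie
      have heS := hall ⟨e, he⟩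
      have hsingle : ∀ x ∈ S, x = (Sum.inr ⟨e, he⟩ : N ⊕ G.edgeSet) := by
        intro x hx
        obtain ⟨w⟩ := hconn ⟨Sum.inr ⟨e, he⟩, heS⟩ ⟨x, hx⟩
        cases w with
        | nil => rfl
        | cons h' p =>
          exfalso
          rename_i b
          obtain ⟨(j | e'), hb⟩ := b
          · exact hunc' j h' hb
          · exact h'
      -- the unique edge is e
      have hcard1 : G.edgeFinset.card ≤ 1 := by
        have h1 : S.filter (fun x => x.isRight = true) ⊆ S := filter_subset _ _
        have h2 : S ⊆ ({Sum.inr ⟨e, he⟩} : Finset (N ⊕ G.edgeSet)) :=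
          fun x hx => by simp [hsingle x hx]
        have := card_le_card (h1.trans h2)
        simp only [card_singleton] at this
        omega
      have hEeq : ∀ f ∈ G.edgeSet, f = e := by
        intro f hf
        have hfm : f ∈ G.edgeFinset := SimpleGraph.mem_edgeFinset.mpr hf
        have hem : e ∈ G.edgeFinset := SimpleGraph.mem_edgeFinset.mpr he
        by_contra hne
        have : 2 ≤ G.edgeFinset.card := by
          have := one_lt_card.mpr ⟨f, hfm, e, hem, hne⟩
          omega
        omega
      refine ⟨{e.out.1}, ?_, by simpa using hC⟩
      intro f hf
      rw [hEeq f hf]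
      exact ⟨e.out.1, mem_singleton_self _, Sym2.out_fst_mem e⟩
end

section
/- Let G be a finite simple graph on a finite vertex set V, let S ⊆ V be a nonempty subset, and let i ∈ S. Then the following are equivalent: (1) there exists a flow y : V × V → ℝ such that (a) y(j,k) ≥ 0 for all j, k; (b) y(j,k) = 0 whenever j and k are not adjacent in G; (c) y(j,k) = 0 whenever k ∉ S; and (d) for every vertex k, the inflow balance holds: (|S| if k = i, else 0) + ∑_{j ∈ V} y(j,k) = (1 if k ∈ S, else 0) + ∑_{l ∈ V} y(k,l); (2) every vertex of S is reachable from i in the subgraph of G induced by S. In particular, the single-commodity flow constraints with a source injecting |S| units at i, each vertex of S absorbing one unit, and flow forbidden into vertices outside S, are satisfiable if and only if the induced subgraph on S is connected (given i ∈ S). -/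
open Finset

noncomputable def wflow {V : Type*} {s : Set V} {G : SimpleGraph V} [DecidableEq V] :
    ∀ {a b : s}, (G.induce s).Walk a b → V → V → ℝ
  | _, _, SimpleGraph.Walk.nil => fun _ _ => 0
  | a, _, SimpleGraph.Walk.cons (v := c) _ p => fun j k =>
      (if j = (a : V) ∧ k = (c : V) then 1 else 0) + wflow p j k

theorem wflow_nonneg {V : Type*} {s : Set V} {G : SimpleGraph V} [DecidableEq V]
    {a b : s} (p : (G.induce s).Walk a b) (j k : V) : 0 ≤ wflow p j k := by
  induction p with
  | nil => simp [wflow]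
  | cons h p ih =>
    simp only [wflow]
    have := ih
    positivity

theorem wflow_adj {V : Type*} {s : Set V} {G : SimpleGraph V} [DecidableEq V]
    {a b : s} (p : (G.induce s).Walk a b) (j k : V) (h : ¬ G.Adj j k) :
    wflow p j k = 0 := by
  induction p with
  | nil => simp [wflow]
  | @cons a c b hadj p ih =>
    simp only [wflow, ih]
    rw [if_neg, zero_add]
    rintro ⟨rfl, rfl⟩
    exact h hadj

theorem wflow_mem {V : Type*} {s : Set V} {G : SimpleGraph V} [DecidableEq V]
    {a b : s} (p : (G.induce s).Walk a b) (j k : V) (h : k ∉ s) :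
    wflow p j k = 0 := by
  induction p with
  | nil => simp [wflow]
  | @cons a c b hadj p ih =>
    simp only [wflow, ih]
    rw [if_neg, zero_add]
    rintro ⟨rfl, rfl⟩
    exact h c.2

theorem wflow_div {V : Type*} [Fintype V] {s : Set V} {G : SimpleGraph V} [DecidableEq V]
    {a b : s} (p : (G.induce s).Walk a b) (v : V) :
    ∑ j : V, wflow p j v - ∑ l : V, wflow p v l =
      (if v = (b : V) then 1 else 0) - (if v = (a : V) then 1 else 0) := by
  induction p with
  | nil => simp [wflow]
  | @cons a c b hadj p ih =>
    simp only [wflow, Finset.sum_add_distrib]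
    have h1 : ∑ j : V, (if j = (a : V) ∧ v = (c : V) then (1:ℝ) else 0) =
        (if v = (c : V) then 1 else 0) := by
      by_cases hv : v = (c : V) <;> simp [hv]
    have h2 : ∑ l : V, (if v = (a : V) ∧ l = (c : V) then (1:ℝ) else 0) =
        (if v = (a : V) then 1 else 0) := by
      by_cases hv : v = (a : V) <;> simp [hv]
    rw [h1, h2]
    linarith [ih]

/-- Network-flow characterization of connectivity of an induced subgraph: for a
nonempty `S ⊆ V` and `i ∈ S`, the single-commodity flow constraints — a source
injecting `|S|` units at `i`, one unit absorbed at each vertex of `S`, flow allowed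
only along edges of `G` and only into vertices of `S` — are satisfiable iff every
vertex of `S` is reachable from `i` in the subgraph of `G` induced by `S`. -/
theorem flow_iff_reachable {V : Type*} [Fintype V] [DecidableEq V]
    (G : SimpleGraph V) (S : Finset V) (hSne : S.Nonempty) (i : V) (hi : i ∈ S) :
    (∃ y : V → V → ℝ,
      (∀ j k, 0 ≤ y j k) ∧
      (∀ j k, ¬ G.Adj j k → y j k = 0) ∧
      (∀ j k, k ∉ S → y j k = 0) ∧
      (∀ k : V,
        (if k = i then (S.card : ℝ) else 0) + ∑ j : V, y j k =
          (if k ∈ S then (1 : ℝ) else 0) + ∑ l : V, y k l)) ↔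
      ∀ k : V, ∀ hk : k ∈ S,
        (G.induce (S : Set V)).Reachable ⟨i, hi⟩ ⟨k, hk⟩ := by
  classical
  constructor
  · rintro ⟨y, hy0, hyadj, hymem, hbal⟩ k hk
    set T : Finset V := S.filter
      (fun v => ∃ hv : v ∈ S, (G.induce (S : Set V)).Reachable ⟨i, hi⟩ ⟨v, hv⟩) with hT
    have hTS : T ⊆ S := Finset.filter_subset _ _
    have hiT : i ∈ T := by
      simp only [hT, Finset.mem_filter]
      exact ⟨hi, hi, SimpleGraph.Reachable.refl _⟩
    -- flow out of T is zero
    have hout : ∀ v ∈ T, ∀ l ∈ Tᶜ, y v l = 0 := by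
      intro v hv l hl
      by_cases hadj : G.Adj v l
      · by_cases hlS : l ∈ S
        · exfalso
          rw [Finset.mem_compl] at hl
          apply hl
          rw [hT, Finset.mem_filter] at hv ⊢
          obtain ⟨hvS, hvS', hr⟩ := hv
          refine ⟨hlS, hlS, hr.trans (SimpleGraph.Adj.reachable ?_)⟩
          exact hadj
        · exact hymem v l hlS
      · exact hyadj v l hadj
    -- sum the balance equations over T
    have hsum : ∑ v ∈ T, ((if v = i then (S.card : ℝ) else 0) + ∑ j : V, y j v) =
        ∑ v ∈ T, ((if v ∈ S then (1 : ℝ) else 0) + ∑ l : V, y v l) :=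
      Finset.sum_congr rfl fun v _ => hbal v
    rw [Finset.sum_add_distrib, Finset.sum_add_distrib] at hsum
    have e1 : ∑ v ∈ T, (if v = i then (S.card : ℝ) else 0) = S.card := by
      rw [Finset.sum_ite_eq' T i (fun _ => (S.card : ℝ)), if_pos hiT]
    have e2 : ∑ v ∈ T, (if v ∈ S then (1 : ℝ) else 0) = T.card := by
      rw [Finset.sum_congr rfl fun v hv => if_pos (hTS hv)]
      simp
    have split1 : ∀ v, ∑ j : V, y j v = ∑ j ∈ T, y j v + ∑ j ∈ Tᶜ, y j v :=
      fun v => (Finset.sum_add_sum_compl T _).symm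
    have split2 : ∀ v, ∑ l : V, y v l = ∑ l ∈ T, y v l + ∑ l ∈ Tᶜ, y v l :=
      fun v => (Finset.sum_add_sum_compl T _).symm
    have ezero : ∑ v ∈ T, ∑ l ∈ Tᶜ, y v l = 0 :=
      Finset.sum_eq_zero fun v hv => Finset.sum_eq_zero fun l hl => hout v hv l hl
    have eswap : ∑ v ∈ T, ∑ j ∈ T, y j v = ∑ v ∈ T, ∑ l ∈ T, y v l :=
      Finset.sum_comm
    have hin : 0 ≤ ∑ v ∈ T, ∑ j ∈ Tᶜ, y j v :=
      Finset.sum_nonneg fun v _ => Finset.sum_nonneg fun j _ => hy0 j v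
    simp only [split1, split2, Finset.sum_add_distrib, ezero, e1, e2] at hsum
    have hcard : (S.card : ℝ) ≤ (T.card : ℝ) := by linarith [hsum, hin, eswap]
    have hTeq : T = S := by
      apply Finset.eq_of_subset_of_card_le hTS
      exact_mod_cast hcard
    have hkT : k ∈ T := hTeq ▸ hk
    rw [hT, Finset.mem_filter] at hkT
    obtain ⟨_, hv, hr⟩ := hkT
    exact hr
  · intro hreach
    have w : ∀ k : {x // x ∈ S}, (G.induce (S : Set V)).Walk ⟨i, hi⟩ ⟨k.1, k.2⟩ :=
      fun k => (hreach k.1 k.2).some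
    refine ⟨fun j l => ∑ k : {x // x ∈ S}, wflow (w k) j l, ?_, ?_, ?_, ?_⟩
    · intro j l
      exact Finset.sum_nonneg fun k _ => wflow_nonneg (w k) j l
    · intro j l h
      exact Finset.sum_eq_zero fun k _ => wflow_adj (w k) j l h
    · intro j l h
      exact Finset.sum_eq_zero fun k _ => wflow_mem (w k) j l (by simpa using h)
    · intro v
      have hdiv : ∀ k : {x // x ∈ S},
          ∑ j : V, wflow (w k) j v - ∑ l : V, wflow (w k) v l =
            (if v = k.1 then 1 else 0) - (if v = i then 1 else 0) :=
        fun k => wflow_div (w k) v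
      have hc1 : ∑ j : V, ∑ k : {x // x ∈ S}, wflow (w k) j v =
          ∑ k : {x // x ∈ S}, ∑ j : V, wflow (w k) j v := Finset.sum_comm
      have hc2 : ∑ l : V, ∑ k : {x // x ∈ S}, wflow (w k) v l =
          ∑ k : {x // x ∈ S}, ∑ l : V, wflow (w k) v l := Finset.sum_comm
      have hkey : ∑ j : V, (∑ k : {x // x ∈ S}, wflow (w k) j v) -
          ∑ l : V, (∑ k : {x // x ∈ S}, wflow (w k) v l) =
          ∑ k : {x // x ∈ S}, ((if v = k.1 then (1:ℝ) else 0) - (if v = i then 1 else 0)) := by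
        rw [hc1, hc2, ← Finset.sum_sub_distrib]
        exact Finset.sum_congr rfl fun k _ => hdiv k
      have hS1 : ∑ k : {x // x ∈ S}, (if v = k.1 then (1:ℝ) else 0) =
          (if v ∈ S then (1:ℝ) else 0) := by
        rw [Finset.sum_coe_sort S (fun x => if v = x then (1:ℝ) else 0)]
        simp [Finset.sum_ite_eq]
      have hS2 : ∑ k : {x // x ∈ S}, (if v = i then (1:ℝ) else 0) =
          (if v = i then (S.card : ℝ) else 0) := by
        by_cases hv : v = i <;> simp [hv, Finset.card_univ, mul_comm]
      rw [Finset.sum_sub_distrib, hS1, hS2] at hkey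
      linarith [hkey]
end
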